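/- Suppose R : X → PMF(Y) is a deletion ε-DP local randomizer with reference distribution ρ, t-samplable via R_∅ : {0,1}^t → Y, and in addition R is replacement ε_r-DP, meaning R(x)(y) ≤ e^{ε_r}·R(x')(y) for all x, x' ∈ X and y ∈ Y. Suppose G : {0,1}^ℓ → {0,1}^t β-fools the density tests of R with 0 ≤ β < 1/(2·e^ε). Then R[G] is a replacement (ε_r + 4·e^ε·β)-DP local randomizer: for all x, x' ∈ X and s ∈ {0,1}^ℓ, R[G](x)(s) ≤ e^{ε_r + 4·e^ε·β} · R[G](x')(s). -/

import Mathlib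

open Finset MeasureTheory

lemma my_intOn (a M : ℝ) :
    IntegrableOn (fun θ => if θ ≤ a then (1:ℝ) else 0) (Set.Ioc (0:ℝ) M) := by
  have h : (fun θ => if θ ≤ a then (1:ℝ) else 0)
      = Set.indicator (Set.Iic a) (fun _ => (1:ℝ)) := by
    ext θ; by_cases h : θ ≤ a <;> simp [Set.indicator, h]
  rw [h]
  exact (integrableOn_const measure_Ioc_lt_top.ne).indicator measurableSet_Iic

lemma my_layer_int (a M : ℝ) (h0 : 0 ≤ a) (hM : a ≤ M) :
    ∫ θ in Set.Ioc (0:ℝ) M, (if θ ≤ a then (1:ℝ) else 0) = a := by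
  have h1 : Set.EqOn (fun θ => if θ ≤ a then (1:ℝ) else 0)
      (Set.indicator (Set.Ioc (0:ℝ) a) (fun _ => (1:ℝ))) (Set.Ioc (0:ℝ) M) := by
    intro θ hθ
    by_cases h : θ ≤ a <;> simp [Set.indicator, Set.mem_Ioc, hθ.1, h]
  rw [setIntegral_congr_fun measurableSet_Ioc h1,
    setIntegral_indicator measurableSet_Ioc]
  have h2 : Set.Ioc (0:ℝ) M ∩ Set.Ioc 0 a = Set.Ioc 0 a := by
    rw [Set.inter_eq_right]; exact Set.Ioc_subset_Ioc_right hM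
  rw [h2, setIntegral_const]
  simp [Real.volume_Ioc, h0]

lemma my_layer_sum {ι : Type*} [Fintype ι] (f : ι → ℝ) (M : ℝ)
    (h0 : ∀ i, 0 ≤ f i) (hM : ∀ i, f i ≤ M) :
    ∑ i, f i = ∫ θ in Set.Ioc (0:ℝ) M, ((univ.filter fun i => θ ≤ f i).card : ℝ) := by
  calc ∑ i, f i = ∑ i, ∫ θ in Set.Ioc (0:ℝ) M, (if θ ≤ f i then (1:ℝ) else 0) :=
        Finset.sum_congr rfl fun i _ => (my_layer_int _ _ (h0 i) (hM i)).symm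
    _ = ∫ θ in Set.Ioc (0:ℝ) M, ∑ i, (if θ ≤ f i then (1:ℝ) else 0) :=
        (integral_finset_sum _ fun i _ => my_intOn _ _).symm
    _ = _ := by
        refine setIntegral_congr_fun measurableSet_Ioc fun θ _ => ?_
        simp [Finset.sum_boole]

lemma my_count_integrable {ι : Type*} [Fintype ι] (f : ι → ℝ) (M : ℝ) :
    IntegrableOn (fun θ => ((univ.filter fun i => θ ≤ f i).card : ℝ)) (Set.Ioc (0:ℝ) M) := by
  have h : (fun θ => ((univ.filter fun i => θ ≤ f i).card : ℝ))
      = fun θ => ∑ i, (if θ ≤ f i then (1:ℝ) else 0) := by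
    funext θ; simp [Finset.sum_boole]
  rw [h]
  exact integrable_finset_sum _ fun i _ => my_intOn _ _

theorem stmt_4 {X Y : Type*} [Fintype X] [Fintype Y] [Nonempty X] [Nonempty Y] [DecidableEq Y]
    (R : X → Y → ℝ) (ρ : Y → ℝ) (ε εr β : ℝ) (t ℓ : ℕ)
    (R₀ : (Fin t → Bool) → Y) (G : (Fin ℓ → Bool) → Fin t → Bool)
    (hRpmf : ∀ x, (∀ y, 0 ≤ R x y) ∧ ∑ y, R x y = 1)
    (hρpmf : (∀ y, 0 ≤ ρ y) ∧ ∑ y, ρ y = 1)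
    (hε : 0 < ε)
    (hDP : ∀ x y, Real.exp (-ε) * ρ y ≤ R x y ∧ R x y ≤ Real.exp ε * ρ y)
    (hDPr : ∀ x x' : X, ∀ y, R x y ≤ Real.exp εr * R x' y)
    (hsamp : ∀ y, ((univ.filter fun r : Fin t → Bool => R₀ r = y).card : ℝ) / 2 ^ t = ρ y)
    (hβ0 : 0 ≤ β) (hβ : β < 1 / (2 * Real.exp ε))
    (hfool : ∀ x : X, ∀ θ ∈ Set.Icc (0 : ℝ) (Real.exp ε),
      |((univ.filter fun s : Fin ℓ → Bool =>
            θ ≤ R x (R₀ (G s)) / ρ (R₀ (G s))).card : ℝ) / 2 ^ ℓ -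
        ((univ.filter fun r : Fin t → Bool =>
            θ ≤ R x (R₀ r) / ρ (R₀ r)).card : ℝ) / 2 ^ t| ≤ β) :
    ∀ (x x' : X) (s : Fin ℓ → Bool),
      (R x (R₀ (G s)) / ρ (R₀ (G s))) /
          (∑ s' : Fin ℓ → Bool, R x (R₀ (G s')) / ρ (R₀ (G s'))) ≤
        Real.exp (εr + 4 * Real.exp ε * β) *
          ((R x' (R₀ (G s)) / ρ (R₀ (G s))) /
            (∑ s' : Fin ℓ → Bool, R x' (R₀ (G s')) / ρ (R₀ (G s')))) := by
  intro x x' s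
  set M := Real.exp ε with hMdef
  have hM0 : 0 < M := Real.exp_pos ε
  have hL : (0:ℝ) < 2 ^ ℓ := by positivity
  have hT : (0:ℝ) < 2 ^ t := by positivity
  -- positivity of ρ on the range of R₀
  have hρpos : ∀ r : Fin t → Bool, 0 < ρ (R₀ r) := by
    intro r
    rw [← hsamp (R₀ r)]
    apply div_pos _ hT
    have hmem : r ∈ univ.filter fun r' : Fin t → Bool => R₀ r' = R₀ r := by simp
    exact_mod_cast Finset.card_pos.mpr ⟨r, hmem⟩
  have hπ0 : ∀ (x : X) (r : Fin t → Bool), 0 ≤ R x (R₀ r) / ρ (R₀ r) :=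
    fun x r => div_nonneg ((hRpmf x).1 _) (hρpos r).le
  have hπM : ∀ (x : X) (r : Fin t → Bool), R x (R₀ r) / ρ (R₀ r) ≤ M :=
    fun x r => (div_le_iff₀ (hρpos r)).mpr (hDP x (R₀ r)).2
  -- the true sum over seeds equals 2^t
  have hsumr : ∀ x : X, ∑ r : Fin t → Bool, R x (R₀ r) / ρ (R₀ r) = 2 ^ t := by
    intro x
    have key : ∀ y : Y, ρ y * (R x y / ρ y) = R x y := by
      intro y
      rcases eq_or_lt_of_le (hρpmf.1 y) with h | h
      · have hR0 : R x y = 0 := le_antisymm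
          (by have h2 := (hDP x y).2; rw [← h] at h2; simpa using h2) ((hRpmf x).1 y)
        rw [← h, hR0]; simp
      · field_simp
    calc ∑ r : Fin t → Bool, R x (R₀ r) / ρ (R₀ r)
        = ∑ y : Y, ∑ r ∈ univ.filter (fun r : Fin t → Bool => R₀ r = y),
            R x (R₀ r) / ρ (R₀ r) :=
          (Finset.sum_fiberwise_of_maps_to (fun r _ => mem_univ _) _).symm
      _ = ∑ y : Y, ((univ.filter fun r : Fin t → Bool => R₀ r = y).card : ℝ) * (R x y / ρ y) := by
          refine Finset.sum_congr rfl fun y _ => ?_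
          rw [Finset.sum_congr rfl (fun r hr => by rw [(Finset.mem_filter.mp hr).2]),
            Finset.sum_const, nsmul_eq_mul]
      _ = ∑ y : Y, 2 ^ t * (ρ y * (R x y / ρ y)) := by
          refine Finset.sum_congr rfl fun y _ => ?_
          have hcard : ((univ.filter fun r : Fin t → Bool => R₀ r = y).card : ℝ) = 2 ^ t * ρ y := by
            rw [← hsamp y]; field_simp
          rw [hcard]; ring
      _ = 2 ^ t := by
          rw [← Finset.mul_sum, Finset.sum_congr rfl fun y _ => key y, (hRpmf x).2, mul_one]
  -- mean of the compressed densities is close to 1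
  have hmean : ∀ x : X,
      |(∑ s' : Fin ℓ → Bool, R x (R₀ (G s')) / ρ (R₀ (G s'))) / 2 ^ ℓ - 1| ≤ M * β := by
    intro x
    have e1 : ∑ s' : Fin ℓ → Bool, R x (R₀ (G s')) / ρ (R₀ (G s'))
        = ∫ θ in Set.Ioc (0:ℝ) M, ((univ.filter fun s' : Fin ℓ → Bool =>
            θ ≤ R x (R₀ (G s')) / ρ (R₀ (G s'))).card : ℝ) :=
      my_layer_sum _ M (fun s' => hπ0 x (G s')) (fun s' => hπM x (G s'))
    have e2 : (1:ℝ) = (∫ θ in Set.Ioc (0:ℝ) M, ((univ.filter fun r : Fin t → Bool =>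
        θ ≤ R x (R₀ r) / ρ (R₀ r)).card : ℝ)) / 2 ^ t := by
      rw [← my_layer_sum _ M (hπ0 x) (hπM x), hsumr x, div_self hT.ne']
    rw [e1, e2]
    have int1 := (my_count_integrable (fun s' : Fin ℓ → Bool =>
      R x (R₀ (G s')) / ρ (R₀ (G s'))) M).div_const (2 ^ ℓ)
    have int2 := (my_count_integrable (fun r : Fin t → Bool =>
      R x (R₀ r) / ρ (R₀ r)) M).div_const (2 ^ t)
    rw [← integral_div, ← integral_div, ← integral_sub int1 int2]
    have hbound : ‖∫ θ in Set.Ioc (0:ℝ) M,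
        (((univ.filter fun s' : Fin ℓ → Bool =>
            θ ≤ R x (R₀ (G s')) / ρ (R₀ (G s'))).card : ℝ) / 2 ^ ℓ -
         ((univ.filter fun r : Fin t → Bool =>
            θ ≤ R x (R₀ r) / ρ (R₀ r)).card : ℝ) / 2 ^ t)‖
        ≤ ∫ _θ in Set.Ioc (0:ℝ) M, β := by
      refine norm_integral_le_of_norm_le (integrableOn_const measure_Ioc_lt_top.ne) ?_
      refine (ae_restrict_iff' measurableSet_Ioc).mpr (Filter.Eventually.of_forall fun θ hθ => ?_)
      rw [Real.norm_eq_abs]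
      exact hfool x θ ⟨hθ.1.le, hθ.2⟩
    rw [Real.norm_eq_abs] at hbound
    have hconst : ∫ _θ in Set.Ioc (0:ℝ) M, β = M * β := by
      rw [setIntegral_const, smul_eq_mul, Real.volume_real_Ioc_of_le (by linarith)]
      ring
    linarith [hbound, hconst.le, hconst.ge]
  -- put everything together
  have hc0 : 0 ≤ M * β := mul_nonneg hM0.le hβ0
  have hc : M * β < 1 / 2 := by
    have h1 : M * β < M * (1 / (2 * M)) := by
      rcases eq_or_lt_of_le hβ0 with h | h
      · rw [← h, mul_zero]; positivity
      · exact mul_lt_mul_of_pos_left hβ hM0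
    have h2 : M * (1 / (2 * M)) = 1 / 2 := by field_simp
    linarith
  have hA := hmean x
  have hB := hmean x'
  rw [abs_le] at hA hB
  set A := ∑ s' : Fin ℓ → Bool, R x (R₀ (G s')) / ρ (R₀ (G s')) with hAdef
  set B := ∑ s' : Fin ℓ → Bool, R x' (R₀ (G s')) / ρ (R₀ (G s')) with hBdef
  have hAge : (1 - M * β) * 2 ^ ℓ ≤ A := by
    have := hA.1
    calc (1 - M * β) * 2 ^ ℓ ≤ A / 2 ^ ℓ * 2 ^ ℓ :=
      mul_le_mul_of_nonneg_right (by linarith) hL.le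
    _ = A := div_mul_cancel₀ _ hL.ne'
  have hBge : (1 - M * β) * 2 ^ ℓ ≤ B := by
    have := hB.1
    calc (1 - M * β) * 2 ^ ℓ ≤ B / 2 ^ ℓ * 2 ^ ℓ :=
      mul_le_mul_of_nonneg_right (by linarith) hL.le
    _ = B := div_mul_cancel₀ _ hL.ne'
  have hBle : B ≤ (1 + M * β) * 2 ^ ℓ := by
    have := hB.2
    calc B = B / 2 ^ ℓ * 2 ^ ℓ := (div_mul_cancel₀ _ hL.ne').symm
    _ ≤ (1 + M * β) * 2 ^ ℓ := mul_le_mul_of_nonneg_right (by linarith) hL.le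
  have hApos : 0 < A := lt_of_lt_of_le (by nlinarith) hAge
  have hBpos : 0 < B := lt_of_lt_of_le (by nlinarith) hBge
  have hKeq : Real.exp (εr + 4 * M * β) = Real.exp εr * Real.exp (4 * (M * β)) := by
    rw [← Real.exp_add]; congr 1; ring
  rw [hKeq, ← mul_div_assoc, div_le_div_iff₀ hApos hBpos]
  have ha : R x (R₀ (G s)) / ρ (R₀ (G s)) ≤ Real.exp εr * (R x' (R₀ (G s)) / ρ (R₀ (G s))) := by
    rw [← mul_div_assoc]
    exact div_le_div_of_nonneg_right (hDPr x x' _) (hρpos _).le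
  have ha'0 : 0 ≤ R x' (R₀ (G s)) / ρ (R₀ (G s)) := hπ0 x' (G s)
  have h1c : 1 + M * β ≤ Real.exp (4 * (M * β)) * (1 - M * β) := by
    have he := Real.add_one_le_exp (4 * (M * β))
    have hmm : (4 * (M * β) + 1) * (1 - M * β) ≤ Real.exp (4 * (M * β)) * (1 - M * β) :=
      mul_le_mul_of_nonneg_right he (by linarith)
    nlinarith [mul_nonneg hc0 (by linarith : (0:ℝ) ≤ 1 - 2 * (M * β))]
  calc R x (R₀ (G s)) / ρ (R₀ (G s)) * B
      ≤ (Real.exp εr * (R x' (R₀ (G s)) / ρ (R₀ (G s)))) * ((1 + M * β) * 2 ^ ℓ) :=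
        mul_le_mul ha hBle hBpos.le (by positivity)
    _ ≤ (Real.exp εr * (R x' (R₀ (G s)) / ρ (R₀ (G s)))) *
          (Real.exp (4 * (M * β)) * ((1 - M * β) * 2 ^ ℓ)) := by
        refine mul_le_mul_of_nonneg_left ?_ (by positivity)
        calc (1 + M * β) * 2 ^ ℓ ≤ (Real.exp (4 * (M * β)) * (1 - M * β)) * 2 ^ ℓ :=
            mul_le_mul_of_nonneg_right h1c hL.le
          _ = Real.exp (4 * (M * β)) * ((1 - M * β) * 2 ^ ℓ) := by ring
    _ ≤ (Real.exp εr * (R x' (R₀ (G s)) / ρ (R₀ (G s)))) * (Real.exp (4 * (M * β)) * A) := by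
        refine mul_le_mul_of_nonneg_left (mul_le_mul_of_nonneg_left hAge (Real.exp_pos _).le)
          (by positivity)
    _ = Real.exp εr * Real.exp (4 * (M * β)) * (R x' (R₀ (G s)) / ρ (R₀ (G s))) * A := by ring
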